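/- arXiv:2203.07297 — 4 statements merged into one kernel-verified Lean document; each statement's English description precedes it below -/
import Mathlib

section
/- For each fixed p ≥ 3, as n → ∞ the cardinality #𝕋_{n,p} is asymptotic to C(p) · n^{−5/2} · (256/27)^n, where C(p) = (2p−3)! / (3√(6π)(p−3)!(p−1)!) · (16/9)^{p−2}. -/
open Nat Filter Real

open Asymptotics

lemma equiv_comp {α β γ : Type*} [NormedField β] {u v : α → β} {l : Filter α}
    (h : u ~[l] v) {g : γ → α} {l' : Filter γ} (hg : Filter.Tendsto g l' l) :
    (u ∘ g) ~[l'] (v ∘ g) :=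
  Asymptotics.IsLittleO.comp_tendsto h hg

lemma lim_ratio (a b c d : ℝ) (hc : 0 < c) :
    Tendsto (fun n : ℕ => (a*n+b)/(c*n+d)) atTop (nhds (a/c)) := by
  have h2 : Tendsto (fun n : ℕ => (a + b/n)/(c + d/n)) atTop (nhds (a/c)) := by
    have := ((tendsto_const_div_atTop_nhds_zero_nat b).const_add a).div
      ((tendsto_const_div_atTop_nhds_zero_nat d).const_add c) (by simpa using hc.ne')
    rw [add_zero, add_zero] at this
    exact this
  refine h2.congr' ?_
  filter_upwards [eventually_ge_atTop 1] with n hn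
  have hn' : (n:ℝ) ≠ 0 := by positivity
  field_simp

lemma lim_pow (c : ℝ) (k m : ℕ) (hk : 0 < k) :
    Tendsto (fun n : ℕ => (1 + c/(k*(n:ℝ)))^(k*n+m)) atTop (nhds (Real.exp c)) := by
  have hkn : Tendsto (fun n : ℕ => k*n) atTop atTop :=
    tendsto_atTop_mono (fun n => Nat.le_mul_of_pos_left n hk) tendsto_id
  have h1 : Tendsto (fun n : ℕ => (1 + c/(k*(n:ℝ)))^(k*n)) atTop (nhds (Real.exp c)) := by
    have := (Real.tendsto_one_add_div_pow_exp c).comp hkn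
    refine this.congr (fun n => ?_)
    simp [Function.comp]
  have h0 : Tendsto (fun n : ℕ => 1 + c/(k*(n:ℝ))) atTop (nhds 1) := by
    have := Tendsto.div_atTop (tendsto_const_nhds (x := c))
      (Tendsto.const_mul_atTop (by exact_mod_cast hk : (0:ℝ) < k) tendsto_natCast_atTop_atTop)
    simpa using this.const_add 1
  have h2 : Tendsto (fun n : ℕ => (1 + c/(k*(n:ℝ)))^m) atTop (nhds 1) := by
    simpa using h0.pow m
  have := h1.mul h2
  rw [mul_one] at this
  refine this.congr (fun n => ?_)
  rw [← pow_add]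

lemma rpow_neg_five_half {x : ℝ} (hx : 0 < x) :
    x ^ (-(5/2) : ℝ) = (x^2 * Real.sqrt x)⁻¹ := by
  rw [Real.rpow_neg hx.le, Real.sqrt_eq_rpow,
    show (5/2 : ℝ) = (2:ℕ) + (1/2 : ℝ) by norm_num,
    Real.rpow_add hx, Real.rpow_natCast]

lemma core (q : ℕ) :
    (fun n : ℕ => ((4*n+q)! : ℝ) / ((n ! : ℝ) * ((3*n+(q+2))! : ℝ))) ~[atTop]
      fun n : ℕ => (2 / Real.sqrt (6*π) * 4^q / 3^(q+2)) * (n:ℝ) ^ (-(5/2):ℝ) * (256/27)^n := by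
  have hfac := Stirling.factorial_isEquivalent_stirling
  have t4 : Tendsto (fun n : ℕ => 4*n+q) atTop atTop :=
    tendsto_atTop_mono (fun n => by simp only [id_eq]; omega) tendsto_id
  have t3 : Tendsto (fun n : ℕ => 3*n+(q+2)) atTop atTop :=
    tendsto_atTop_mono (fun n => by simp only [id_eq]; omega) tendsto_id
  have hF : (fun n : ℕ => ((4*n+q)! : ℝ) / ((n ! : ℝ) * ((3*n+(q+2))! : ℝ))) ~[atTop]
      (fun n : ℕ => (Real.sqrt (2*((4*n+q:ℕ):ℝ)*π) * (((4*n+q:ℕ):ℝ)/Real.exp 1)^(4*n+q)) /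
        ((Real.sqrt (2*(n:ℝ)*π) * ((n:ℝ)/Real.exp 1)^n) *
          (Real.sqrt (2*((3*n+(q+2):ℕ):ℝ)*π) * (((3*n+(q+2):ℕ):ℝ)/Real.exp 1)^(3*n+(q+2))))) :=
    (equiv_comp hfac t4).div (hfac.mul (equiv_comp hfac t3))
  refine hF.trans ?_
  refine isEquivalent_of_tendsto_one ?_
  · -- the main limit computation
    set E := Real.exp 1 with hE
    have hA := lim_pow (q:ℝ) 4 q (by norm_num)
    have hB := lim_pow ((q:ℝ)+2) 3 (q+2) (by norm_num)
    have hs : Tendsto (fun n : ℕ => Real.sqrt ((12*(n:ℝ)+3*q)/(3*(n:ℝ)+((q:ℝ)+2)))/2)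
        atTop (nhds 1) := by
      have hinner := lim_ratio 12 (3*q) 3 ((q:ℝ)+2) (by norm_num)
      have h4 : (12:ℝ)/3 = 4 := by norm_num
      rw [h4] at hinner
      have := (Real.continuous_sqrt.tendsto 4).comp hinner
      have h2 : Real.sqrt 4 = 2 := by
        rw [show (4:ℝ) = 2^2 by norm_num, Real.sqrt_sq (by norm_num)]
      have := this.div_const 2
      rw [h2] at this
      simpa [Function.comp] using this
    have hP : Tendsto (fun n : ℕ =>
        E^2 * (1 + (q:ℝ)/(4*(n:ℝ)))^(4*n+q) / (1 + ((q:ℝ)+2)/(3*(n:ℝ)))^(3*n+(q+2)))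
        atTop (nhds 1) := by
      have := (tendsto_const_nhds (x := E^2) (f := atTop (α := ℕ))).mul hA
      have := this.div hB (Real.exp_ne_zero _)
      have heq : E^2 * Real.exp q / Real.exp ((q:ℝ)+2) = 1 := by
        rw [hE, Real.exp_one_pow, ← Real.exp_add, ← Real.exp_sub,
          show ((2:ℕ):ℝ)+(q:ℝ)-((q:ℝ)+2) = 0 by push_cast; ring, Real.exp_zero]
      rwa [heq] at this
    have := hs.mul hP
    rw [mul_one] at this
    push_cast at hA hB
    refine this.congr' ?_
    filter_upwards [eventually_ge_atTop 1] with n hn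
    have h1 : (1:ℝ) ≤ (n:ℝ) := by exact_mod_cast hn
    have hx : (0:ℝ) < n := by linarith
    have hπ := Real.pi_pos
    simp only [Pi.div_apply]
    have hc4 : ((4*n+q : ℕ):ℝ) = 4*(n:ℝ)+(q:ℝ) := by push_cast; ring
    have hc3 : ((3*n+(q+2) : ℕ):ℝ) = 3*(n:ℝ)+((q:ℝ)+2) := by push_cast; ring
    have ha : (0:ℝ) < 4*(n:ℝ)+(q:ℝ) := by positivity
    have hb : (0:ℝ) < 3*(n:ℝ)+((q:ℝ)+2) := by positivity
    rw [hc4, hc3, rpow_neg_five_half hx,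
      show 2*(4*(n:ℝ)+(q:ℝ))*π = (2*π)*(4*(n:ℝ)+(q:ℝ)) by ring,
      Real.sqrt_mul (by positivity),
      show 2*(n:ℝ)*π = (2*π)*(n:ℝ) by ring, Real.sqrt_mul (by positivity),
      show 2*(3*(n:ℝ)+((q:ℝ)+2))*π = (2*π)*(3*(n:ℝ)+((q:ℝ)+2)) by ring,
      Real.sqrt_mul (by positivity),
      show (6:ℝ)*π = 3*(2*π) by ring, Real.sqrt_mul (by norm_num : (0:ℝ) ≤ 3),
      show 12*(n:ℝ)+3*(q:ℝ) = 3*(4*(n:ℝ)+(q:ℝ)) by ring,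
      Real.sqrt_div (by positivity), Real.sqrt_mul (by norm_num : (0:ℝ) ≤ 3),
      show 1 + (q:ℝ)/(4*(n:ℝ)) = (4*(n:ℝ)+(q:ℝ))/(4*(n:ℝ)) by field_simp,
      show 1 + ((q:ℝ)+2)/(3*(n:ℝ)) = (3*(n:ℝ)+((q:ℝ)+2))/(3*(n:ℝ)) by field_simp,
      show (256:ℝ)/27 = 4^4/3^3 by norm_num]
    simp only [div_pow, mul_pow, ← pow_mul]
    have e1 : Real.sqrt (2*π) ≠ 0 := by positivity
    have e2 : Real.sqrt (4*(n:ℝ)+(q:ℝ)) ≠ 0 := by positivity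
    have e3 : Real.sqrt (3*(n:ℝ)+((q:ℝ)+2)) ≠ 0 := by positivity
    have e4 : Real.sqrt (n:ℝ) ≠ 0 := by positivity
    have e5 : Real.sqrt 3 ≠ 0 := by positivity
    have e6 : Real.exp 1 ≠ 0 := Real.exp_ne_zero 1
    have e7 : (n:ℝ) ≠ 0 := hx.ne'
    field_simp
    rw [Real.sqrt_mul (by positivity), Real.sqrt_mul (by positivity),
      eq_div_iff (by positivity)]
    ring

/-- `#𝕋_{n,p}`: the number of simple triangulations of the `p`-gon with `n` inner
vertices, given by its closed formula, as a real number. -/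
noncomputable def Tnp (n p : ℕ) : ℝ :=
  (2 * (2*p-3)! * (4*n+2*p-5)! : ℕ) / ((p-3)! * (p-1)! * n ! * (3*n+2*p-3)! : ℕ)

/-- The constant `C(p)` in the asymptotic enumeration of simple triangulations of the `p`-gon. -/
noncomputable def Cp (p : ℕ) : ℝ :=
  ((2*p-3)! : ℝ) / (3 * Real.sqrt (6*Real.pi) * (p-3)! * (p-1)!) * (16/9)^(p-2)

/-- For each fixed `p ≥ 3`, `#𝕋_{n,p} ∼ C(p) n^{-5/2} (256/27)^n` as `n → ∞`. -/
theorem Tnp_asymptotic (p : ℕ) (hp : 3 ≤ p) :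
    Tendsto (fun n : ℕ => Tnp n p / (Cp p * (n:ℝ) ^ (-(5/2) : ℝ) * (256/27)^n))
      atTop (nhds 1) := by
  obtain ⟨m, rfl⟩ : ∃ m, p = m + 3 := ⟨p - 3, by omega⟩
  have hπ := Real.pi_pos
  have f1 : ((m ! : ℕ) : ℝ) ≠ 0 := Nat.cast_ne_zero.mpr (Nat.factorial_ne_zero _)
  have f2 : (((m+2)! : ℕ) : ℝ) ≠ 0 := Nat.cast_ne_zero.mpr (Nat.factorial_ne_zero _)
  have f3 : (((2*m+3)! : ℕ) : ℝ) ≠ 0 := Nat.cast_ne_zero.mpr (Nat.factorial_ne_zero _)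
  set A : ℝ := 2*(((2*m+3)! : ℕ) : ℝ) / (((m ! : ℕ) : ℝ) * (((m+2)! : ℕ) : ℝ)) with hA
  have hApos : 0 < A := by
    rw [hA]
    have g1 : 0 < (((2*m+3)! : ℕ) : ℝ) := Nat.cast_pos.mpr (Nat.factorial_pos _)
    have g2 : 0 < ((m ! : ℕ) : ℝ) := Nat.cast_pos.mpr (Nat.factorial_pos _)
    have g3 : 0 < (((m+2)! : ℕ) : ℝ) := Nat.cast_pos.mpr (Nat.factorial_pos _)
    positivity
  have hTnp : (fun n : ℕ => Tnp n (m+3)) = fun n : ℕ =>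
      A * (((4*n+(2*m+1))! : ℝ) / ((n ! : ℝ) * ((3*n+((2*m+1)+2))! : ℝ))) := by
    funext n
    unfold Tnp
    rw [show 2*(m+3)-3 = 2*m+3 by omega, show 4*n+2*(m+3)-5 = 4*n+(2*m+1) by omega,
      show (m+3)-3 = m by omega, show (m+3)-1 = m+2 by omega,
      show 3*n+2*(m+3)-3 = 3*n+((2*m+1)+2) by omega, hA]
    have f4 : ((n ! : ℕ) : ℝ) ≠ 0 := Nat.cast_ne_zero.mpr (Nat.factorial_ne_zero _)
    have f5 : (((3*n+((2*m+1)+2))! : ℕ) : ℝ) ≠ 0 := Nat.cast_ne_zero.mpr (Nat.factorial_ne_zero _)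
    push_cast
    field_simp
  have hCp : Cp (m+3) = A * (2 / Real.sqrt (6*π) * 4^(2*m+1) / 3^((2*m+1)+2)) := by
    unfold Cp
    rw [show 2*(m+3)-3 = 2*m+3 by omega, show (m+3)-3 = m by omega,
      show (m+3)-1 = m+2 by omega, show (m+3)-2 = m+1 by omega, hA]
    have hs6 : Real.sqrt (6*π) ≠ 0 := by positivity
    rw [div_pow, show (16:ℝ) = 4^2 by norm_num, show (9:ℝ) = 3^2 by norm_num,
      ← pow_mul, ← pow_mul]
    field_simp
    ring
  have hfinal : (fun n : ℕ => Tnp n (m+3)) ~[atTop]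
      (fun n : ℕ => Cp (m+3) * (n:ℝ) ^ (-(5/2):ℝ) * (256/27)^n) := by
    have hmul := (IsEquivalent.refl (u := fun _ : ℕ => A) (l := atTop)).mul (core (2*m+1))
    have : (fun n : ℕ => Cp (m+3) * (n:ℝ) ^ (-(5/2):ℝ) * (256/27)^n)
        = fun n : ℕ => A * ((2 / Real.sqrt (6*π) * 4^(2*m+1) / 3^((2*m+1)+2))
            * (n:ℝ) ^ (-(5/2):ℝ) * (256/27)^n) := by
      funext n
      rw [hCp]; ring
    rw [hTnp, this]
    exact hmul
  have hne : ∀ᶠ n : ℕ in atTop, Cp (m+3) * (n:ℝ)^(-(5/2):ℝ) * (256/27)^n ≠ 0 := by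
    filter_upwards [eventually_ge_atTop 1] with n hn
    have hx : (0:ℝ) < n := by exact_mod_cast Nat.lt_of_lt_of_le Nat.zero_lt_one hn
    have hCpos : 0 < Cp (m+3) := by
      rw [hCp]
      exact mul_pos hApos (by positivity)
    exact (mul_pos (mul_pos hCpos (Real.rpow_pos_of_pos hx _)) (by positivity)).ne'
  exact (isEquivalent_iff_tendsto_one hne).mp hfinal
end

section
/- For every integer p ≥ 3, the partition function Z(p) := Σ_{n ≥ 0} (27/256)^n · #𝕋_{n,p} converges and equals 81(2p−4)! / (128(p−2)! p!) · (16/9)^p. -/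
open Nat Filter Real

section FCAaux
open Finset

noncomputable def FCA : ℕ → ℕ → ℝ
  | 0, _ => 1
  | (n+1), a => (a : ℝ) * ((4*n+a+3)! : ℕ) / (((n+1)! * (3*n+a+3)! : ℕ))

lemma FCA_nonneg (n a : ℕ) : 0 ≤ FCA n a := by
  cases n with
  | zero => norm_num [FCA]
  | succ n => exact div_nonneg (by positivity) (by positivity)

lemma fact_cast_succ (k : ℕ) : (((k+1)! : ℕ) : ℝ) = (k+1) * ((k ! : ℕ) : ℝ) := by
  rw [Nat.factorial_succ]; push_cast; ring

lemma FCA_one (a : ℕ) : FCA 1 a = a := by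
  show (a : ℝ) * ((4*0+a+3)! : ℕ) / (((0+1)! * (3*0+a+3)! : ℕ)) = a
  have h : (((a+3)!: ℕ) : ℝ) ≠ 0 := by exact_mod_cast (Nat.factorial_pos _).ne'
  push_cast
  field_simp
  simp

lemma FCA_rec (n a : ℕ) : FCA (n+1) (a+1) = FCA (n+1) a + FCA n (a+4) := by
  cases n with
  | zero =>
    rw [FCA_one, FCA_one]
    show _ = _ + (1:ℝ)
    push_cast; ring
  | succ m =>
    show ((a+1:ℕ) : ℝ) * ((4*(m+1)+(a+1)+3)! : ℕ) / (((m+1+1)! * (3*(m+1)+(a+1)+3)! : ℕ))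
      = (a : ℝ) * ((4*(m+1)+a+3)! : ℕ) / (((m+1+1)! * (3*(m+1)+a+3)! : ℕ))
      + ((a+4:ℕ) : ℝ) * ((4*m+(a+4)+3)! : ℕ) / (((m+1)! * (3*m+(a+4)+3)! : ℕ))
    push_cast
    rw [show 4*(m+1)+(a+1)+3 = (4*m+a+7)+1 from by ring,
        show 3*(m+1)+(a+1)+3 = (3*m+a+6)+1 from by ring,
        show 4*(m+1)+a+3 = 4*m+a+7 from by ring,
        show 3*(m+1)+a+3 = 3*m+a+6 from by ring,
        show 4*m+(a+4)+3 = (4*m+a+6)+1 from by ring,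
        show 3*m+(a+4)+3 = (3*m+a+6)+1 from by ring,
        show m+1+1 = (m+1)+1 from rfl]
    rw [fact_cast_succ (4*m+a+7), fact_cast_succ (3*m+a+6), fact_cast_succ (m+1),
        fact_cast_succ (4*m+a+6)]
    have hf1 : (((4*m+a+6)! : ℕ) : ℝ) ≠ 0 := by exact_mod_cast (Nat.factorial_pos _).ne'
    have hf2 : (((3*m+a+6)! : ℕ) : ℝ) ≠ 0 := by exact_mod_cast (Nat.factorial_pos _).ne'
    have hf3 : (((m+1)! : ℕ) : ℝ) ≠ 0 := by exact_mod_cast (Nat.factorial_pos _).ne'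
    push_cast
    field_simp
    ring

lemma FCA_zero_left (a : ℕ) : FCA 0 a = 1 := rfl

lemma FCA_zero_right (n : ℕ) (hn : n ≠ 0) : FCA n 0 = 0 := by
  cases n with
  | zero => exact absurd rfl hn
  | succ m => show ((0:ℕ) : ℝ) * _ / _ = 0; simp

lemma rothe : ∀ n a b : ℕ,
    ∑ k ∈ range (n+1), FCA k a * FCA (n-k) b = FCA n (a+b) := by
  intro n
  induction n using Nat.strong_induction_on with
  | _ n ih =>
    cases n with
    | zero => intro a b; simp [FCA_zero_left]
    | succ m =>
      intro a
      induction a with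
      | zero =>
        intro b
        rw [Finset.sum_eq_single 0]
        · simp [FCA_zero_left]
        · intro k hk hk0
          rw [FCA_zero_right k hk0, zero_mul]
        · intro h; simp at h
      | succ a iha =>
        intro b
        rw [Finset.sum_range_succ']
        have e1 : ∀ i ∈ range (m+1),
            FCA (i+1) (a+1) * FCA (m+1-(i+1)) b
            = FCA (i+1) a * FCA (m+1-(i+1)) b + FCA i (a+4) * FCA (m-i) b := by
          intro i hi
          rw [show m+1-(i+1) = m-i from by omega, FCA_rec, add_mul]
        rw [Finset.sum_congr rfl e1, Finset.sum_add_distrib]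
        have e2 : ∑ i ∈ range (m+1), FCA i (a+4) * FCA (m-i) b = FCA m (a+4+b) :=
          ih m (Nat.lt_succ_self m) (a+4) b
        have e3 : FCA 0 (a+1) * FCA (m+1-0) b = FCA 0 a * FCA (m+1-0) b := by
          rw [FCA_zero_left, FCA_zero_left]
        rw [e2, e3]
        have e4 : (∑ i ∈ range (m+1), FCA (i+1) a * FCA (m+1-(i+1)) b)
            + FCA 0 a * FCA (m+1-0) b = FCA (m+1) (a+b) := by
          have := Finset.sum_range_succ' (fun k => FCA k a * FCA (m+1-k) b) (m+1)
          rw [← this]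
          exact iha b
        rw [add_right_comm, e4]
        rw [show a+4+b = a+b+4 from by ring, show a+1+b = (a+b)+1 from by ring]
        exact (FCA_rec m (a+b)).symm

noncomputable def Qb (n a : ℕ) : ℝ := ((4*n+a)! : ℕ) / ((n ! : ℕ) * ((3*n+a)! : ℕ))

lemma fact_cast_pos (k : ℕ) : (0:ℝ) < ((k ! : ℕ) : ℝ) := by
  exact_mod_cast Nat.factorial_pos k

lemma fact_add4 (k : ℕ) : ((k+4)!) = (k+4)*((k+3)*((k+2)*((k+1)*(k !)))) := by
  rw [show k+4 = (k+3)+1 from by omega, Nat.factorial_succ,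
      show k+3 = (k+2)+1 from by omega, Nat.factorial_succ,
      show k+2 = (k+1)+1 from by omega, Nat.factorial_succ, Nat.factorial_succ]

lemma fact_add3 (k : ℕ) : ((k+3)!) = (k+3)*((k+2)*((k+1)*(k !))) := by
  rw [show k+3 = (k+2)+1 from by omega, Nat.factorial_succ,
      show k+2 = (k+1)+1 from by omega, Nat.factorial_succ, Nat.factorial_succ]

lemma Qb_pos (n a : ℕ) : 0 < Qb n a := by
  unfold Qb
  have := fact_cast_pos (4*n+a); have := fact_cast_pos n; have := fact_cast_pos (3*n+a)
  positivity

lemma Qb_succ_n (n a : ℕ) : Qb (n+1) a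
    = ((4*n+a+4)*(4*n+a+3)*(4*n+a+2)*(4*n+a+1))/((n+1)*((3*n+a+3)*(3*n+a+2)*(3*n+a+1)))
      * Qb n a := by
  unfold Qb
  rw [show 4*(n+1)+a = (4*n+a)+4 from by ring, show 3*(n+1)+a = (3*n+a)+3 from by ring,
      fact_add4, fact_add3, Nat.factorial_succ]
  have h1 := fact_cast_pos (4*n+a); have h2 := fact_cast_pos n; have h3 := fact_cast_pos (3*n+a)
  have hn : (0:ℝ) < (n:ℝ)+1 := by positivity
  push_cast
  field_simp

lemma Qb_succ_a (n a : ℕ) : Qb n (a+1) = ((4*n+a+1)/(3*n+a+1)) * Qb n a := by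
  unfold Qb
  rw [show 4*n+(a+1) = (4*n+a)+1 from by ring, show 3*n+(a+1) = (3*n+a)+1 from by ring,
      Nat.factorial_succ, Nat.factorial_succ]
  have h1 := fact_cast_pos (4*n+a); have h2 := fact_cast_pos n; have h3 := fact_cast_pos (3*n+a)
  have h4 : (0:ℝ) < (3*n+a:ℝ)+1 := by positivity
  push_cast
  field_simp

lemma Qb_ratio0 (n : ℕ) : Qb (n+1) 0 ≤ 256/27 * Qb n 0 := by
  rw [Qb_succ_n]
  apply mul_le_mul_of_nonneg_right _ (Qb_pos n 0).le
  have hn : (0:ℝ) ≤ (n:ℝ) := Nat.cast_nonneg n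
  rw [div_le_iff₀ (by positivity)]
  push_cast
  nlinarith [hn, mul_nonneg hn hn, mul_nonneg (mul_nonneg hn hn) hn,
    mul_nonneg (mul_nonneg (mul_nonneg hn hn) hn) hn]

lemma Qb_zero_le (n : ℕ) : Qb n 0 ≤ (256/27)^n := by
  induction n with
  | zero => unfold Qb; norm_num
  | succ n ih =>
    calc Qb (n+1) 0 ≤ 256/27 * Qb n 0 := Qb_ratio0 n
      _ ≤ 256/27 * (256/27)^n := by nlinarith [Qb_pos n 0]
      _ = (256/27)^(n+1) := by ring

lemma Qb_ratio_a (n a : ℕ) : Qb n (a+1) ≤ 4/3 * Qb n a := by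
  rw [Qb_succ_a]
  apply mul_le_mul_of_nonneg_right _ (Qb_pos n a).le
  have hn : (0:ℝ) ≤ (n:ℝ) := Nat.cast_nonneg n
  have ha : (0:ℝ) ≤ (a:ℝ) := Nat.cast_nonneg a
  rw [div_le_iff₀ (by positivity)]
  push_cast
  nlinarith

lemma Qb_le (n a : ℕ) : Qb n a ≤ (4/3)^a * (256/27)^n := by
  induction a with
  | zero => simpa using Qb_zero_le n
  | succ a ih =>
    calc Qb n (a+1) ≤ 4/3 * Qb n a := Qb_ratio_a n a
      _ ≤ 4/3 * ((4/3)^a * (256/27)^n) := by nlinarith [Qb_pos n a]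
      _ = (4/3)^(a+1) * (256/27)^n := by ring

lemma FCA_le_Qb (n a : ℕ) : FCA n a ≤ Qb n a := by
  cases n with
  | zero =>
    show (1:ℝ) ≤ Qb 0 a
    unfold Qb
    have h := fact_cast_pos a
    norm_num
    rw [div_self h.ne']
  | succ n =>
    show (a : ℝ) * ((4*n+a+3)! : ℕ) / (((n+1)! * (3*n+a+3)! : ℕ)) ≤ Qb (n+1) a
    unfold Qb
    rw [show 4*(n+1)+a = (4*n+a+3)+1 from by ring, show 3*(n+1)+a = 3*n+a+3 from by ring]
    have e : ((4*n+a+3)+1)! = ((4*n+a+3)+1) * (4*n+a+3)! := Nat.factorial_succ _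
    rw [e]
    have h1 := fact_cast_pos (4*n+a+3)
    have h2 := fact_cast_pos (n+1)
    have h3 := fact_cast_pos (3*n+a+3)
    have ha : (0:ℝ) ≤ (a:ℝ) := Nat.cast_nonneg a
    have hn : (0:ℝ) ≤ (n:ℝ) := Nat.cast_nonneg n
    push_cast
    rw [div_le_div_iff₀ (by positivity) (by positivity)]
    nlinarith [mul_pos (mul_pos h1 h2) h3, mul_nonneg hn (mul_pos (mul_pos h1 h2) h3).le]

lemma FCA_le (n a : ℕ) : FCA n a ≤ (4/3)^a * (256/27)^n :=
  (FCA_le_Qb n a).trans (Qb_le n a)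

noncomputable def Phi (a : ℕ) (x : ℝ) : ℝ := ∑' n, FCA n a * x^n

lemma phiF_nonneg {x : ℝ} (hx : 0 ≤ x) (a n : ℕ) : 0 ≤ FCA n a * x^n :=
  mul_nonneg (FCA_nonneg n a) (pow_nonneg hx n)

lemma phiF_le {x : ℝ} (hx : 0 ≤ x) (a n : ℕ) :
    FCA n a * x^n ≤ (4/3)^a * (256/27*x)^n := by
  calc FCA n a * x^n ≤ ((4/3)^a * (256/27)^n) * x^n :=
        mul_le_mul_of_nonneg_right (FCA_le n a) (pow_nonneg hx n)
    _ = (4/3)^a * (256/27*x)^n := by rw [mul_pow]; ring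

lemma summable_phiF {x : ℝ} (hx : 0 ≤ x) (hq : 256/27*x < 1) (a : ℕ) :
    Summable (fun n => FCA n a * x^n) :=
  Summable.of_nonneg_of_le (phiF_nonneg hx a) (phiF_le hx a)
    (((summable_geometric_of_lt_one (by positivity) hq).mul_left _))

lemma summable_phiF_norm {x : ℝ} (hx : 0 ≤ x) (hq : 256/27*x < 1) (a : ℕ) :
    Summable (fun n => ‖FCA n a * x^n‖) := by
  have := summable_phiF hx hq a
  simpa [Real.norm_of_nonneg (phiF_nonneg hx a _)] using this

lemma hasSum_phiF {x : ℝ} (hx : 0 ≤ x) (hq : 256/27*x < 1) (a : ℕ) :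
    HasSum (fun n => FCA n a * x^n) (Phi a x) :=
  (summable_phiF hx hq a).hasSum

lemma phi_mul {x : ℝ} (hx : 0 ≤ x) (hq : 256/27*x < 1) (a b : ℕ) :
    Phi a x * Phi b x = Phi (a+b) x := by
  rw [Phi, Phi, Phi,
    tsum_mul_tsum_eq_tsum_sum_range_of_summable_norm (summable_phiF_norm hx hq a)
      (summable_phiF_norm hx hq b)]
  congr 1
  funext n
  have e : ∀ k ∈ range (n+1),
      FCA k a * x^k * (FCA (n-k) b * x^(n-k)) = FCA k a * FCA (n-k) b * x^n := by
    intro k hk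
    have hk' : k ≤ n := Nat.lt_succ_iff.mp (Finset.mem_range.mp hk)
    rw [show x^n = x^(k + (n-k)) from by rw [show k + (n-k) = n from by omega], pow_add]
    ring
  rw [Finset.sum_congr rfl e, ← Finset.sum_mul, rothe n a b]

lemma FCA_shift (n : ℕ) : FCA (n+1) 1 = FCA n 4 := by
  cases n with
  | zero => rw [FCA_one]; norm_num; rfl
  | succ m =>
    show ((1:ℕ) : ℝ) * ((4*(m+1)+1+3)! : ℕ) / (((m+1+1)! * (3*(m+1)+1+3)! : ℕ))
      = ((4:ℕ) : ℝ) * ((4*m+4+3)! : ℕ) / (((m+1)! * (3*m+4+3)! : ℕ))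
    rw [show 4*(m+1)+1+3 = (4*m+7)+1 from by ring, show 3*(m+1)+1+3 = 3*m+7 from by ring,
        show 4*m+4+3 = 4*m+7 from by ring, show 3*m+4+3 = 3*m+7 from by ring,
        show m+1+1 = (m+1)+1 from rfl]
    have e1 : ((4*m+7)+1)! = ((4*m+7)+1) * (4*m+7)! := Nat.factorial_succ _
    have e2 : ((m+1)+1)! = ((m+1)+1) * (m+1)! := Nat.factorial_succ _
    rw [e1, e2]
    have h1 := fact_cast_pos (4*m+7)
    have h2 := fact_cast_pos (m+1)
    have h3 := fact_cast_pos (3*m+7)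
    push_cast
    field_simp
    ring

lemma phi_funeq {x : ℝ} (hx : 0 ≤ x) (hq : 256/27*x < 1) :
    Phi 1 x = 1 + x * (Phi 1 x)^4 := by
  have h4 : Phi 4 x = (Phi 1 x)^4 := by
    rw [show (4:ℕ) = 1+1+1+1 from rfl, ← phi_mul hx hq, ← phi_mul hx hq, ← phi_mul hx hq]
    ring
  have hshift : ∀ n : ℕ, FCA (n+1) 1 * x^(n+1) = x * (FCA n 4 * x^n) := by
    intro n; rw [FCA_shift, pow_succ]; ring
  have key : Phi 1 x = 1 + x * Phi 4 x := by
    calc Phi 1 x = FCA 0 1 * x^0 + ∑' n, FCA (n+1) 1 * x^(n+1) :=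
          Summable.tsum_eq_zero_add (summable_phiF hx hq 1)
      _ = 1 + x * Phi 4 x := by
          rw [tsum_congr hshift, tsum_mul_left]
          show FCA 0 1 * x ^ 0 + x * Phi 4 x = 1 + x * Phi 4 x
          norm_num
          rfl
  conv_lhs => rw [key]
  rw [h4]

lemma xu_nonneg {u : ℝ} (hu : 0 ≤ u) (hu4 : u < 1/4) : 0 ≤ u*(1-u)^3 := by
  have : (0:ℝ) < 1 - u := by linarith
  positivity

lemma xu_lt {u : ℝ} (hu : 0 ≤ u) (hu4 : u < 1/4) : 256/27*(u*(1-u)^3) < 1 := by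
  have h1 : (0:ℝ) < 1-4*u := by linarith
  have h2 : (0:ℝ) < 16*u^2-40*u+27 := by nlinarith
  nlinarith [mul_pos (mul_pos h1 h1) h2]

lemma phi_one_cont {b : ℝ} (hb : 0 ≤ b) (hb4 : b < 1/4) :
    ContinuousOn (fun u => Phi 1 (u*(1-u)^3)) (Set.Icc 0 b) := by
  set qb : ℝ := (27 - 17*(1-4*b)^2)/27 with hqb
  have hqb0 : 0 ≤ qb := by
    rw [hqb]
    have : (1-4*b)^2 ≤ 1 := by nlinarith
    nlinarith
  have hqb1 : qb < 1 := by
    rw [hqb]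
    have h14 : (0:ℝ) < 1-4*b := by linarith
    nlinarith
  have hbound : ∀ n : ℕ, ∀ u ∈ Set.Icc (0:ℝ) b,
      ‖FCA n 1 * (u*(1-u)^3)^n‖ ≤ (4/3) * qb^n := by
    intro n u hu
    obtain ⟨hu0, hub⟩ := hu
    have hu4 : u < 1/4 := lt_of_le_of_lt hub hb4
    have hx0 : 0 ≤ u*(1-u)^3 := xu_nonneg hu0 hu4
    rw [Real.norm_of_nonneg (phiF_nonneg hx0 1 n)]
    have h1 : FCA n 1 * (u*(1-u)^3)^n ≤ (4/3)^1 * (256/27*(u*(1-u)^3))^n := phiF_le hx0 1 n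
    have h2 : 256/27*(u*(1-u)^3) ≤ qb := by
      rw [hqb]
      have ha : (1-4*b)^2 ≤ (1-4*u)^2 := by nlinarith
      have hc : (17:ℝ) ≤ 16*u^2-40*u+27 := by nlinarith
      have hd : (0:ℝ) ≤ 1-4*u := by linarith
      nlinarith [mul_le_mul ha hc (by norm_num) (sq_nonneg (1-4*u)),
        sq_nonneg (1-4*u), mul_nonneg (mul_nonneg hd hd) (by linarith : (0:ℝ) ≤ 16*u^2-40*u+27)]
    calc FCA n 1 * (u*(1-u)^3)^n ≤ (4/3)^1 * (256/27*(u*(1-u)^3))^n := h1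
      _ ≤ (4/3) * qb^n := by
          rw [pow_one]
          exact mul_le_mul_of_nonneg_left (pow_le_pow_left₀ (by positivity) h2 n) (by norm_num)
  have hsum : Summable (fun n : ℕ => (4/3 : ℝ) * qb^n) :=
    (summable_geometric_of_lt_one hqb0 hqb1).mul_left _
  have := tendstoUniformlyOn_tsum_nat hsum hbound
  apply TendstoUniformlyOn.continuousOn this
  apply Filter.Eventually.frequently
  filter_upwards with N
  apply Continuous.continuousOn
  apply continuous_finset_sum
  intro i _
  continuity

lemma phi_one_zero : Phi 1 0 = 1 := by
  rw [Phi, tsum_eq_single 0]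
  · norm_num; rfl
  · intro n hn
    cases n with
    | zero => exact absurd rfl hn
    | succ m => simp

lemma phi_one_lt {b : ℝ} (hb : 0 ≤ b) (hb4 : b < 1/4) :
    ∀ u ∈ Set.Icc (0:ℝ) b, Phi 1 (u*(1-u)^3) < 4/3 := by
  by_contra hcon
  push_neg at hcon
  obtain ⟨u₀, hu₀, hge⟩ := hcon
  obtain ⟨hu00, hu0b⟩ := hu₀
  have hcont : ContinuousOn (fun u => Phi 1 (u*(1-u)^3)) (Set.Icc 0 u₀) :=
    (phi_one_cont hb hb4).mono (Set.Icc_subset_Icc_right hu0b)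
  have hmem : (4/3 : ℝ) ∈ Set.Icc (Phi 1 (0*(1-0)^3)) (Phi 1 (u₀*(1-u₀)^3)) := by
    constructor
    · rw [show (0:ℝ)*(1-0)^3 = 0 from by ring, phi_one_zero]; norm_num
    · exact hge
  obtain ⟨c, hc, hgc⟩ := intermediate_value_Icc hu00 hcont hmem
  obtain ⟨hc0, hcu⟩ := hc
  have hc4 : c < 1/4 := lt_of_le_of_lt (hcu.trans hu0b) hb4
  have hfe := phi_funeq (xu_nonneg hc0 hc4) (xu_lt hc0 hc4)
  have hgc' : Phi 1 (c*(1-c)^3) = 4/3 := hgc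
  rw [hgc'] at hfe
  have := xu_lt hc0 hc4
  nlinarith [hfe]

lemma phi_one_val {u : ℝ} (hu : 0 ≤ u) (hu4 : u < 1/4) :
    Phi 1 (u*(1-u)^3) = 1/(1-u) := by
  set x := u*(1-u)^3 with hxdef
  have hx0 : 0 ≤ x := xu_nonneg hu hu4
  have hq : 256/27*x < 1 := xu_lt hu hu4
  set y := Phi 1 x with hydef
  set y' := (1/(1-u) : ℝ) with hy'def
  have h1u : (0:ℝ) < 1-u := by linarith
  have hy4 : y = 1 + x*y^4 := phi_funeq hx0 hq
  have hy'4 : y' = 1 + x*y'^4 := by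
    rw [hy'def, hxdef]
    field_simp
    ring
  have hylt : y < 4/3 := phi_one_lt hu hu4 u ⟨hu, le_refl u⟩
  have hy0 : 0 ≤ y := by
    rw [hydef, Phi]
    exact tsum_nonneg (fun n => phiF_nonneg hx0 1 n)
  have hy'lt : y' < 4/3 := by
    rw [hy'def, div_lt_iff₀ h1u]; linarith
  have hy'0 : 0 ≤ y' := by positivity
  have hd : (y - y')*(1 - x*(y^3+y^2*y'+y*y'^2+y'^3)) = 0 := by
    linear_combination hy4 - hy'4
  rcases mul_eq_zero.mp hd with h | h
  · linarith
  · exfalso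
    have hs0 : 0 ≤ y^3+y^2*y'+y*y'^2+y'^3 := by positivity
    have hslt : y^3+y^2*y'+y*y'^2+y'^3 < 256/27 := by nlinarith
    have : x*(y^3+y^2*y'+y*y'^2+y'^3) < 1 := by
      rcases eq_or_lt_of_le hx0 with hx | hx
      · rw [← hx]; norm_num
      · calc x*(y^3+y^2*y'+y*y'^2+y'^3) ≤ x*(256/27) := by nlinarith
          _ < 1 := by linarith [hq]
    linarith

lemma phi_val {u : ℝ} (hu : 0 ≤ u) (hu4 : u < 1/4) :
    ∀ a : ℕ, 1 ≤ a → Phi a (u*(1-u)^3) = (1/(1-u))^a := by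
  intro a ha
  induction a with
  | zero => omega
  | succ a ih =>
    rcases Nat.eq_or_lt_of_le ha with h | h
    · rw [← h, phi_one_val hu hu4, pow_one]
    · have ha1 : 1 ≤ a := by omega
      rw [← phi_mul (xu_nonneg hu hu4) (xu_lt hu hu4) a 1, ih ha1, phi_one_val hu hu4]
      ring

noncomputable def Tc (s n : ℕ) : ℝ := ((4*n+2*s+1)! : ℕ) / ((n ! * (3*n+2*s+3)! : ℕ))

noncomputable def Bshift (s : ℕ) (x : ℝ) : ℕ → ℝ
  | 0 => 0
  | (n+1) => x * (FCA n (2*s+6) * x^n)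

lemma Tc_nonneg (s n : ℕ) : 0 ≤ Tc s n := by
  unfold Tc; positivity

lemma FCA_eq (m b : ℕ) :
    FCA m (b+1) = ((b+1 : ℕ) : ℝ) * ((4*m+b)! : ℕ) / ((m ! * (3*m+b+1)! : ℕ)) := by
  cases m with
  | zero =>
    show (1:ℝ) = _
    simp only [Nat.mul_zero, Nat.zero_add]
    have e : (b+1)! = (b+1) * b ! := Nat.factorial_succ _
    rw [e]
    have h := fact_cast_pos b
    push_cast
    rw [Nat.factorial_zero]
    field_simp
    simp
  | succ k =>
    show ((b+1:ℕ) : ℝ) * ((4*k+(b+1)+3)! : ℕ) / (((k+1)! * (3*k+(b+1)+3)! : ℕ)) = _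
    rw [show 4*k+(b+1)+3 = 4*(k+1)+b from by omega,
        show 3*k+(b+1)+3 = 3*(k+1)+b+1 from by omega]

lemma hasSum_Bshift {x : ℝ} (hx : 0 ≤ x) (hq : 256/27*x < 1) (s : ℕ) :
    HasSum (Bshift s x) (x * Phi (2*s+6) x) := by
  have h : HasSum (fun n => Bshift s x (n+1)) (x * Phi (2*s+6) x) :=
    (hasSum_phiF hx hq (2*s+6)).mul_left x
  have h2 := (hasSum_nat_add_iff (f := Bshift s x) 1).mp h
  simpa [Bshift] using h2

lemma Tc_term (s : ℕ) {x : ℝ} (n : ℕ) :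
    Tc s n * x^n = (1/(2*s+2)) * (FCA n (2*s+2) * x^n)
      + (1/(2*s+6)) * Bshift s x n - (1/(2*s+3)) * (FCA n (2*s+3) * x^n) := by
  have key : ∀ m : ℕ, Tc s m = (1/(2*s+2)) * FCA m (2*s+2) - (1/(2*s+3)) * FCA m (2*s+3)
      + (if h : m = 0 then 0 else (1/(2*s+6)) * FCA (m-1) (2*s+6)) := by
    intro m
    cases m with
    | zero =>
      simp only [dif_pos]
      show Tc s 0 = (1/(2*s+2)) * 1 - (1/(2*s+3)) * 1 + 0
      unfold Tc
      rw [show 4*0+2*s+1 = 2*s+1 from by omega, show 3*0+2*s+3 = (2*s+2)+1 from by omega]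
      have e1 : ((2*s+2)+1)! = ((2*s+2)+1) * (2*s+2)! := Nat.factorial_succ _
      have e2 : (2*s+2)! = ((2*s+1)+1) * (2*s+1)! := Nat.factorial_succ _
      rw [e1, e2]
      have h := fact_cast_pos (2*s+1)
      push_cast
      rw [Nat.factorial_zero]
      field_simp
      ring
    | succ n =>
      simp only [dif_neg (Nat.succ_ne_zero n)]
      rw [show (2*s+2) = (2*s+1)+1 from by omega, FCA_eq,
          show (2*s+3) = (2*s+2)+1 from by omega, FCA_eq,
          show (2*s+6) = (2*s+5)+1 from by omega, FCA_eq,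
          show n+1-1 = n from by omega]
      unfold Tc
      rw [show 4*(n+1)+(2*s+1) = 4*n+2*s+5 from by omega,
          show 3*(n+1)+(2*s+1)+1 = 3*n+2*s+5 from by omega,
          show 4*(n+1)+(2*s+2) = (4*n+2*s+5)+1 from by omega,
          show 3*(n+1)+(2*s+2)+1 = (3*n+2*s+5)+1 from by omega,
          show 4*n+(2*s+5) = 4*n+2*s+5 from by omega,
          show 3*n+(2*s+5)+1 = (3*n+2*s+5)+1 from by omega,
          show 4*(n+1)+2*s+1 = 4*n+2*s+5 from by omega,
          show 3*(n+1)+2*s+3 = (3*n+2*s+5)+1 from by omega]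
      have e1 : ((4*n+2*s+5)+1)! = ((4*n+2*s+5)+1) * (4*n+2*s+5)! := Nat.factorial_succ _
      have e2 : ((3*n+2*s+5)+1)! = ((3*n+2*s+5)+1) * (3*n+2*s+5)! := Nat.factorial_succ _
      have e3 : (n+1)! = (n+1) * n ! := Nat.factorial_succ _
      rw [e1, e2, e3]
      have h1 := fact_cast_pos (4*n+2*s+5)
      have h2 := fact_cast_pos (3*n+2*s+5)
      have h3 := fact_cast_pos n
      push_cast
      field_simp
      ring
  cases n with
  | zero =>
    have := key 0
    simp only [dif_pos] at this
    show Tc s 0 * x^0 = (1/(2*s+2)) * (FCA 0 (2*s+2) * x^0)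
      + (1/(2*s+6)) * (0:ℝ) - (1/(2*s+3)) * (FCA 0 (2*s+3) * x^0)
    rw [pow_zero]
    linarith [this]
  | succ n =>
    have := key (n+1)
    simp only [dif_neg (Nat.succ_ne_zero n), show n+1-1 = n from by omega] at this
    show Tc s (n+1) * x^(n+1) = (1/(2*s+2)) * (FCA (n+1) (2*s+2) * x^(n+1))
      + (1/(2*s+6)) * (x * (FCA n (2*s+6) * x^n)) - (1/(2*s+3)) * (FCA (n+1) (2*s+3) * x^(n+1))
    rw [this]
    rw [pow_succ]
    ring

/-- value of the `Tc s` series at `x = u(1-u)^3`. -/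
noncomputable def Hval (s : ℕ) (u : ℝ) : ℝ :=
  (1/(2*s+2)) * (1/(1-u))^(2*s+2) + (1/(2*s+6)) * (u*(1-u)^3 * (1/(1-u))^(2*s+6))
    - (1/(2*s+3)) * (1/(1-u))^(2*s+3)

lemma hasSum_Tc (s : ℕ) {u : ℝ} (hu : 0 ≤ u) (hu4 : u < 1/4) :
    HasSum (fun n => Tc s n * (u*(1-u)^3)^n) (Hval s u) := by
  set x := u*(1-u)^3 with hx
  have hx0 : 0 ≤ x := xu_nonneg hu hu4
  have hq : 256/27*x < 1 := xu_lt hu hu4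
  have h1 := (hasSum_phiF hx0 hq (2*s+2)).mul_left (1/(2*s+2) : ℝ)
  have h2 := (hasSum_Bshift hx0 hq s).mul_left (1/(2*s+6) : ℝ)
  have h3 := (hasSum_phiF hx0 hq (2*s+3)).mul_left (1/(2*s+3) : ℝ)
  have h := (h1.add h2).sub h3
  have hfun : (fun n => Tc s n * x^n)
      = fun n => (1/(2*s+2)) * (FCA n (2*s+2) * x^n) + (1/(2*s+6)) * Bshift s x n
        - (1/(2*s+3)) * (FCA n (2*s+3) * x^n) := funext (fun n => Tc_term s n)
  rw [hfun]
  have hv : Hval s u = (1/(2*s+2)) * Phi (2*s+2) x + (1/(2*s+6)) * (x * Phi (2*s+6) x)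
      - (1/(2*s+3)) * Phi (2*s+3) x := by
    rw [Hval, phi_val hu hu4 (2*s+2) (by omega), phi_val hu hu4 (2*s+6) (by omega),
        phi_val hu hu4 (2*s+3) (by omega)]
  rw [hv]
  exact h

noncomputable def Lval (s : ℕ) : ℝ :=
  (1/(2*s+2)) * (4/3)^(2*s+2) + (1/(2*s+6)) * (27/256 * (4/3)^(2*s+6))
    - (1/(2*s+3)) * (4/3)^(2*s+3)

/-- the approximating sequence `u j → 1/4⁻`. -/
noncomputable def useq (j : ℕ) : ℝ := 1/4 - (1/8) * (1/(j+1))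

lemma useq_mem (j : ℕ) : 0 ≤ useq j ∧ useq j < 1/4 := by
  unfold useq
  have h1 : (0:ℝ) < 1/((j:ℝ)+1) := by positivity
  have h2 : 1/((j:ℝ)+1) ≤ 1 := by
    rw [div_le_one (by positivity)]; linarith [Nat.cast_nonneg (α := ℝ) j]
  constructor <;> nlinarith

lemma useq_tendsto : Tendsto useq atTop (nhds (1/4)) := by
  have h : Tendsto (fun j : ℕ => 1/((j:ℝ)+1)) atTop (nhds 0) :=
    tendsto_one_div_add_atTop_nhds_zero_nat
  have h2 := (h.const_mul (1/8 : ℝ)).const_sub (1/4 : ℝ)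
  have hfun : useq = fun j : ℕ => 1/4 - 1/8 * (1/((j:ℝ)+1)) := rfl
  rw [hfun]
  norm_num at h2 ⊢
  exact h2

lemma xseq_tendsto : Tendsto (fun j => useq j * (1-useq j)^3) atTop (nhds (27/256)) := by
  have h1 : Tendsto (fun j => (1 - useq j)) atTop (nhds (3/4)) := by
    have := useq_tendsto.const_sub (1:ℝ)
    norm_num at this ⊢
    exact this
  have := useq_tendsto.mul (h1.pow 3)
  norm_num at this ⊢
  exact this

lemma Hval_tendsto (s : ℕ) : Tendsto (fun j => Hval s (useq j)) atTop (nhds (Lval s)) := by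
  have h1 : Tendsto (fun j => (1 - useq j)) atTop (nhds (3/4)) := by
    have := useq_tendsto.const_sub (1:ℝ)
    norm_num at this ⊢
    exact this
  have h2 : Tendsto (fun j => 1/(1 - useq j)) atTop (nhds (4/3)) := by
    have := h1.inv₀ (by norm_num)
    norm_num at this ⊢
    exact this
  have hx := xseq_tendsto
  unfold Hval Lval
  apply Tendsto.sub
  · apply Tendsto.add
    · exact (h2.pow (2*s+2)).const_mul _
    · exact ((hx.mul (h2.pow (2*s+6))).const_mul _)
  · exact (h2.pow (2*s+3)).const_mul _

lemma hasSum_Tc_boundary (s : ℕ) :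
    HasSum (fun n => Tc s n * (27/256 : ℝ)^n) (Lval s) := by
  set tr := fun n => Tc s n * (27/256 : ℝ)^n with htr
  have tr_nonneg : ∀ n, 0 ≤ tr n := fun n => mul_nonneg (Tc_nonneg s n) (by positivity)
  have hbound : ∀ N, ∑ n ∈ range N, tr n ≤ Lval s := by
    intro N
    have hle : ∀ j, ∑ n ∈ range N, Tc s n * (useq j*(1-useq j)^3)^n ≤ Hval s (useq j) := by
      intro j
      obtain ⟨h0, h4⟩ := useq_mem j
      exact sum_le_hasSum (range N)
        (fun n _ => mul_nonneg (Tc_nonneg s n) (pow_nonneg (xu_nonneg h0 h4) n))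
        (hasSum_Tc s h0 h4)
    have hlim : Tendsto (fun j => ∑ n ∈ range N, Tc s n * (useq j*(1-useq j)^3)^n)
        atTop (nhds (∑ n ∈ range N, tr n)) := by
      apply tendsto_finset_sum
      intro n _
      exact (xseq_tendsto.pow n).const_mul _
    exact le_of_tendsto_of_tendsto' hlim (Hval_tendsto s) hle
  have hsummable : Summable tr := summable_of_sum_range_le tr_nonneg hbound
  have hub : tsum tr ≤ Lval s := Real.tsum_le_of_sum_range_le tr_nonneg hbound
  have hlb : Lval s ≤ tsum tr := by
    apply le_of_tendsto (Hval_tendsto s)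
    filter_upwards with j
    obtain ⟨h0, h4⟩ := useq_mem j
    rw [← (hasSum_Tc s h0 h4).tsum_eq]
    apply Summable.tsum_le_tsum _ (hasSum_Tc s h0 h4).summable hsummable
    intro n
    apply mul_le_mul_of_nonneg_left _ (Tc_nonneg s n)
    apply pow_le_pow_left₀ (xu_nonneg h0 h4) _ n
    nlinarith [xu_lt h0 h4]
  have heq : tsum tr = Lval s := le_antisymm hub hlb
  exact heq ▸ hsummable.hasSum

end FCAaux

/-- For every `p ≥ 3`, the partition function `Z(p) = Σ_{n ≥ 0} (27/256)^n #𝕋_{n,p}`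
converges, with sum `81 (2p-4)! / (128 (p-2)! p!) · (16/9)^p`. -/
theorem Z_partition_function (p : ℕ) (hp : 3 ≤ p) :
    HasSum (fun n : ℕ => (27/256 : ℝ)^n * Tnp n p)
      (81 * ((2*p-4)! : ℝ) / (128 * (p-2)! * p !) * (16/9)^p) := by
  obtain ⟨s, rfl⟩ : ∃ s, p = s+3 := ⟨p-3, by omega⟩
  set c : ℝ := 2 * ((2*s+3)! : ℕ) / (((s ! : ℕ) : ℝ) * ((s+2)! : ℕ)) with hc
  have key := (hasSum_Tc_boundary s).mul_left c
  have hfun : (fun n => c * (Tc s n * (27/256 : ℝ)^n))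
      = fun n : ℕ => (27/256 : ℝ)^n * Tnp n (s+3) := by
    funext n
    unfold Tnp
    rw [show 2*(s+3)-3 = 2*s+3 from by omega, show 4*n+2*(s+3)-5 = 4*n+2*s+1 from by omega,
        show s+3-3 = s from by omega, show s+3-1 = s+2 from by omega,
        show 3*n+2*(s+3)-3 = 3*n+2*s+3 from by omega]
    rw [hc]
    unfold Tc
    have h1 := fact_cast_pos (2*s+3); have h2 := fact_cast_pos s
    have h3 := fact_cast_pos (s+2); have h4 := fact_cast_pos n
    have h5 := fact_cast_pos (4*n+2*s+1); have h6 := fact_cast_pos (3*n+2*s+3)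
    push_cast
    field_simp
  rw [hfun] at key
  have hval : c * Lval s
      = 81 * ((2*(s+3)-4)! : ℕ) / (128 * ((s+3-2)! : ℕ) * ((s+3)! : ℕ)) * (16/9 : ℝ)^(s+3) := by
    rw [show 2*(s+3)-4 = 2*s+2 from by omega, show s+3-2 = s+1 from by omega]
    rw [hc]
    unfold Lval
    have e1 : (2*s+3)! = (2*s+3) * (2*s+2)! := Nat.factorial_succ _
    have e2 : (s+3)! = (s+3) * ((s+2) * ((s+1) * s !)) := by
      rw [show s+3 = (s+2)+1 from by omega, Nat.factorial_succ,
          show s+2 = (s+1)+1 from by omega, Nat.factorial_succ, Nat.factorial_succ]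
    have e3 : (s+2)! = (s+2) * ((s+1) * s !) := by
      rw [show s+2 = (s+1)+1 from by omega, Nat.factorial_succ, Nat.factorial_succ]
    have e4 : (s+1)! = (s+1) * s ! := Nat.factorial_succ _
    rw [e1, e2, e3, e4]
    have p1 : ((4:ℝ)/3)^(2*s+2) = (16/9)^s * (16/9) := by
      rw [show 2*s+2 = 2*s+2 from rfl, pow_add, pow_mul]; norm_num
    have p2 : ((4:ℝ)/3)^(2*s+6) = (16/9)^s * (16/9)^3 := by
      rw [pow_add, pow_mul]; norm_num
    have p3 : ((4:ℝ)/3)^(2*s+3) = (16/9)^s * (4/3)^3 := by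
      rw [pow_add, pow_mul]; norm_num
    have p4 : ((16:ℝ)/9)^(s+3) = (16/9)^s * (16/9)^3 := by rw [pow_add]
    rw [p1, p2, p3, p4]
    have h1 := fact_cast_pos (2*s+2); have h2 := fact_cast_pos s
    have hs0 : (0:ℝ) ≤ (s:ℝ) := Nat.cast_nonneg s
    push_cast
    field_simp
    ring
  rw [hval] at key
  exact key
end

section
/- There exists a constant c > 0 such that for all n ≥ 1 and p ≥ 3, #𝕋_{n,p} ≤ c · C(p) · n^{−5/2} · (256/27)^n; furthermore, for each α > 0 there exists c(α) > 0 such that #𝕋_{n,p} ≥ c(α) · C(p) · n^{−5/2} · (256/27)^n uniformly for all n ≥ 1 and 3 ≤ p ≤ α√n. -/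
open Nat Filter Real

/-! ### Auxiliary definitions -/

/-- `W n q = (4n+2q+1)!/(n!(3n+2q+3)!)·(9/16)^(q+1) = Tnp n (q+3)/(6√(6π) Cp (q+3))`. -/
noncomputable def Wfun (n q : ℕ) : ℝ :=
  ((4*n+2*q+1)! : ℝ) / (((n)! : ℝ) * ((3*n+2*q+3)! : ℝ)) * (9/16)^(q+1)

/-- `G n = (4n+1)!/(n!(3n+3)!)·(27/256)^n`. -/
noncomputable def Gfun (n : ℕ) : ℝ :=
  ((4*n+1)! : ℝ) / (((n)! : ℝ) * ((3*n+3)! : ℝ)) * (27/256)^n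

lemma Wfun_pos (n q : ℕ) : 0 < Wfun n q := by unfold Wfun; positivity

lemma Gfun_pos (n : ℕ) : 0 < Gfun n := by unfold Gfun; positivity

lemma Cp_pos (q : ℕ) : 0 < Cp (q+3) := by
  unfold Cp
  have h6 : (0:ℝ) < 6 * Real.pi := by positivity
  positivity

lemma Tnp_eq_W (n q : ℕ) :
    Tnp n (q+3) = 6 * Real.sqrt (6*Real.pi) * Cp (q+3) * Wfun n q := by
  have e1 : 2*(q+3)-3 = 2*q+3 := by omega
  have e2 : 4*n+2*(q+3)-5 = 4*n+2*q+1 := by omega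
  have e3 : (q+3)-3 = q := by omega
  have e4 : (q+3)-1 = q+2 := by omega
  have e5 : 3*n+2*(q+3)-3 = 3*n+2*q+3 := by omega
  have e6 : (q+3)-2 = q+1 := by omega
  have hs : (0:ℝ) < Real.sqrt (6*Real.pi) := by
    have : (0:ℝ) < 6 * Real.pi := by positivity
    exact Real.sqrt_pos.mpr this
  simp only [Tnp, Cp, Wfun, e1, e2, e3, e4, e5, e6]
  push_cast
  have h1 : ((2*q+3)! : ℝ) ≠ 0 := by positivity
  have h2 : ((q)! : ℝ) ≠ 0 := by positivity
  have h3 : ((q+2)! : ℝ) ≠ 0 := by positivity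
  have h4 : ((n)! : ℝ) ≠ 0 := by positivity
  have h5 : ((3*n+2*q+3)! : ℝ) ≠ 0 := by positivity
  have h7 : ((16:ℝ)/9)^(q+1) ≠ 0 := by positivity
  field_simp
  ring_nf
  rw [← mul_pow]; norm_num

lemma Wfun_succ (n q : ℕ) :
    Wfun n (q+1) = Wfun n q *
      ((9:ℝ)/16 * (((4*n+2*q+3) * (4*n+2*q+2) : ℕ) : ℝ) /
        (((3*n+2*q+5) * (3*n+2*q+4) : ℕ) : ℝ)) := by
  have e1 : 4*n+2*(q+1)+1 = (4*n+2*q+2)+1 := by omega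
  have e2 : 3*n+2*(q+1)+3 = (3*n+2*q+4)+1 := by omega
  have e3 : 4*n+2*q+2 = (4*n+2*q+1)+1 := by omega
  have e4 : 3*n+2*q+4 = (3*n+2*q+3)+1 := by omega
  simp only [Wfun, e1, e2]
  rw [Nat.factorial_succ ((4*n+2*q+2)), Nat.factorial_succ ((3*n+2*q+4))]
  rw [show (4*n+2*q+2)! = (4*n+2*q+2) * (4*n+2*q+1)! by rw [e3, Nat.factorial_succ]]
  rw [show (3*n+2*q+4)! = (3*n+2*q+4) * (3*n+2*q+3)! by rw [e4, Nat.factorial_succ]]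
  push_cast
  have h4 : ((n)! : ℝ) ≠ 0 := by positivity
  have h5 : ((3*n+2*q+3)! : ℝ) ≠ 0 := by positivity
  field_simp
  ring

lemma Gfun_succ (n : ℕ) :
    Gfun (n+1) = Gfun n *
      ((27:ℝ)/256 * ((4*n+5) * (4*n+4) * (4*n+3) * (4*n+2) : ℕ) /
        (((n+1) * ((3*n+6) * (3*n+5) * (3*n+4)) : ℕ) : ℝ)) := by
  have e1 : 4*(n+1)+1 = (4*n+4)+1 := by omega
  have e2 : 3*(n+1)+3 = (3*n+5)+1 := by omega
  simp only [Gfun, e1, e2]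
  rw [Nat.factorial_succ (4*n+4), Nat.factorial_succ (3*n+5),
    show (4*n+4)! = (4*n+4)*(4*n+3)! from Nat.factorial_succ (4*n+3),
    show (4*n+3)! = (4*n+3)*(4*n+2)! from Nat.factorial_succ (4*n+2),
    show (4*n+2)! = (4*n+2)*(4*n+1)! from Nat.factorial_succ (4*n+1),
    show (3*n+5)! = (3*n+5)*(3*n+4)! from Nat.factorial_succ (3*n+4),
    show (3*n+4)! = (3*n+4)*(3*n+3)! from Nat.factorial_succ (3*n+3),
    Nat.factorial_succ n]
  push_cast
  have h4 : ((n)! : ℝ) ≠ 0 := by positivity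
  have h5 : ((3*n+3)! : ℝ) ≠ 0 := by positivity
  field_simp
  ring

lemma Wfun_zero (n : ℕ) : Wfun n 0 = (9/16 : ℝ) * Gfun n * (256/27)^n := by
  simp only [Wfun, Gfun]
  have : ((27:ℝ)/256)^n * (256/27)^n = 1 := by
    rw [← mul_pow]; norm_num
  field_simp
  ring_nf
  linarith [this]

/-- `W` is nonincreasing in `q`. -/
lemma Wfun_le_zero (n q : ℕ) : Wfun n q ≤ Wfun n 0 := by
  induction q with
  | zero => exact le_rfl
  | succ q ih =>
    refine le_trans ?_ ih
    rw [Wfun_succ]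
    have hB : (0:ℝ) < (((3*n+2*q+5) * (3*n+2*q+4) : ℕ) : ℝ) := by positivity
    have hratio : (9:ℝ)/16 * (((4*n+2*q+3) * (4*n+2*q+2) : ℕ) : ℝ) /
        (((3*n+2*q+5) * (3*n+2*q+4) : ℕ) : ℝ) ≤ 1 := by
      rw [div_le_one hB]
      push_cast
      have hx : (0:ℝ) ≤ (n:ℝ) := Nat.cast_nonneg n
      have hy : (0:ℝ) ≤ (q:ℝ) := Nat.cast_nonneg q
      nlinarith [mul_nonneg hx hy, sq_nonneg ((n:ℝ)+(q:ℝ))]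
    calc Wfun n q * _ ≤ Wfun n q * 1 :=
          mul_le_mul_of_nonneg_left hratio (Wfun_pos n q).le
      _ = Wfun n q := mul_one _

/-- Decreasing step for `G(n)²(n+1)⁵`. -/
lemma G_step_upper (n : ℕ) :
    (Gfun (n+1))^2 * ((n:ℝ)+2)^5 ≤ (Gfun n)^2 * ((n:ℝ)+1)^5 := by
  rw [Gfun_succ, mul_pow, mul_assoc]
  have hx : (0:ℝ) ≤ (n:ℝ) := Nat.cast_nonneg n
  refine mul_le_mul_of_nonneg_left ?_ (sq_nonneg (Gfun n))
  have hD : (0:ℝ) < ((((n+1) * ((3*n+6) * (3*n+5) * (3*n+4)) : ℕ)) : ℝ)^2 := by positivity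
  rw [div_pow, div_mul_eq_mul_div, div_le_iff₀ hD]
  push_cast
  set x := (n:ℝ)
  nlinarith [pow_nonneg hx 2, pow_nonneg hx 3, pow_nonneg hx 4, pow_nonneg hx 5,
    pow_nonneg hx 6, pow_nonneg hx 7, pow_nonneg hx 8, pow_nonneg hx 9,
    pow_nonneg hx 10, pow_nonneg hx 11]

/-- Increasing step for `G(n)²n⁵`. -/
lemma G_step_lower (n : ℕ) :
    (Gfun n)^2 * ((n:ℝ))^5 ≤ (Gfun (n+1))^2 * ((n:ℝ)+1)^5 := by
  rw [Gfun_succ, mul_pow, mul_assoc]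
  have hx : (0:ℝ) ≤ (n:ℝ) := Nat.cast_nonneg n
  refine mul_le_mul_of_nonneg_left ?_ (sq_nonneg (Gfun n))
  have hD : (0:ℝ) < ((((n+1) * ((3*n+6) * (3*n+5) * (3*n+4)) : ℕ)) : ℝ)^2 := by positivity
  rw [div_pow, div_mul_eq_mul_div, le_div_iff₀ hD]
  push_cast
  set x := (n:ℝ)
  nlinarith [pow_nonneg hx 2, pow_nonneg hx 3, pow_nonneg hx 4, pow_nonneg hx 5,
    pow_nonneg hx 6, pow_nonneg hx 7, pow_nonneg hx 8, pow_nonneg hx 9,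
    pow_nonneg hx 10, pow_nonneg hx 11]

lemma G_upper (n : ℕ) : (Gfun n)^2 * ((n:ℝ)+1)^5 ≤ (1/6:ℝ)^2 := by
  induction n with
  | zero =>
    have h0 : Gfun 0 = 1/6 := by
      simp [Gfun, Nat.factorial]
    rw [h0]; norm_num
  | succ n ih =>
    refine le_trans ?_ ih
    have := G_step_upper n
    calc (Gfun (n+1))^2 * (((n+1:ℕ):ℝ)+1)^5 = (Gfun (n+1))^2 * ((n:ℝ)+2)^5 := by
          push_cast; ring
      _ ≤ (Gfun n)^2 * ((n:ℝ)+1)^5 := this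

lemma G_lower (n : ℕ) (hn : 1 ≤ n) : (9/512:ℝ)^2 ≤ (Gfun n)^2 * ((n:ℝ))^5 := by
  induction n with
  | zero => omega
  | succ n ih =>
    rcases Nat.eq_or_lt_of_le hn with h | h
    · have hG1 : Gfun 1 = 9/512 := by
        have h5 : (4*1+1)! = 120 := by decide
        have h6 : (3*1+3)! = 720 := by decide
        have h1 : (1:ℕ)! = 1 := by decide
        simp only [Gfun, h5, h6, h1]
        norm_num
      have : n + 1 = 1 := h.symm
      rw [this, hG1]
      norm_num
    · have hn' : 1 ≤ n := by omega
      refine le_trans (ih hn') ?_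
      have := G_step_lower n
      calc (Gfun n)^2 * ((n:ℝ))^5 ≤ (Gfun (n+1))^2 * ((n:ℝ)+1)^5 := this
        _ = (Gfun (n+1))^2 * (((n+1:ℕ):ℝ))^5 := by push_cast; ring

/-- `exp(−2x) ≤ 1−x` for `0 ≤ x ≤ 1/2`. -/
lemma exp_neg_two_le (x : ℝ) (hx : 0 ≤ x) (hx2 : x ≤ 1/2) :
    Real.exp (-(2*x)) ≤ 1 - x := by
  have h := Real.add_one_le_exp x
  have hexp : (1+x)^2 ≤ Real.exp (2*x) := by
    have h2 : Real.exp (2*x) = Real.exp x ^ 2 := by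
      rw [← Real.exp_nat_mul]; ring_nf
    rw [h2]
    have h1 : 0 ≤ 1 + x := by linarith
    nlinarith
  have hpos : 0 < Real.exp (2*x) := Real.exp_pos _
  rw [Real.exp_neg]
  rw [inv_le_iff_one_le_mul₀ hpos]
  nlinarith [mul_le_mul_of_nonneg_left hexp (by linarith : (0:ℝ) ≤ 1 - x),
    mul_nonneg (mul_nonneg hx hx) hx]

/-- Lower bound on the `q → q+1` ratio of `W`. -/
lemma W_ratio_ge (n q : ℕ) (hn : 1 ≤ n) :
    Real.exp (-((4*(q:ℝ)+21)/(6*(n:ℝ)))) ≤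
      (9:ℝ)/16 * (((4*n+2*q+3) * (4*n+2*q+2) : ℕ) : ℝ) /
        (((3*n+2*q+5) * (3*n+2*q+4) : ℕ) : ℝ) := by
  have hx : (1:ℝ) ≤ (n:ℝ) := by exact_mod_cast hn
  have hq : (0:ℝ) ≤ (q:ℝ) := Nat.cast_nonneg q
  push_cast
  set x := (n:ℝ) with hxdef
  set y := (q:ℝ) with hydef
  have hC : (0:ℝ) < 3*x+2*y+5 := by linarith
  have hD : (0:ℝ) < 3*x+2*y+4 := by linarith
  have f1 : Real.exp (-((2*y+11)/(6*x))) ≤ (3*(4*x+2*y+3))/(4*(3*x+2*y+5)) := by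
    have h1 : (0:ℝ) ≤ (2*y+11)/(12*x+8*y+20) := by positivity
    have h2 : (2*y+11)/(12*x+8*y+20) ≤ 1/2 := by
      rw [div_le_iff₀ (by linarith)]; linarith
    have h3 := exp_neg_two_le _ h1 h2
    have h4 : -((2*y+11)/(6*x)) ≤ -(2*((2*y+11)/(12*x+8*y+20))) := by
      have : 2*((2*y+11)/(12*x+8*y+20)) ≤ (2*y+11)/(6*x) := by
        rw [mul_div_assoc', div_le_div_iff₀ (by linarith) (by linarith)]
        nlinarith
      linarith
    calc Real.exp (-((2*y+11)/(6*x))) ≤ Real.exp (-(2*((2*y+11)/(12*x+8*y+20)))) :=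
          Real.exp_le_exp.mpr h4
      _ ≤ 1 - (2*y+11)/(12*x+8*y+20) := h3
      _ = (3*(4*x+2*y+3))/(4*(3*x+2*y+5)) := by
          rw [eq_div_iff (by linarith)]
          field_simp
          ring
  have f2 : Real.exp (-((2*y+10)/(6*x))) ≤ (3*(4*x+2*y+2))/(4*(3*x+2*y+4)) := by
    have h1 : (0:ℝ) ≤ (2*y+10)/(12*x+8*y+16) := by positivity
    have h2 : (2*y+10)/(12*x+8*y+16) ≤ 1/2 := by
      rw [div_le_iff₀ (by linarith)]; linarith
    have h3 := exp_neg_two_le _ h1 h2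
    have h4 : -((2*y+10)/(6*x)) ≤ -(2*((2*y+10)/(12*x+8*y+16))) := by
      have : 2*((2*y+10)/(12*x+8*y+16)) ≤ (2*y+10)/(6*x) := by
        rw [mul_div_assoc', div_le_div_iff₀ (by linarith) (by linarith)]
        nlinarith
      linarith
    calc Real.exp (-((2*y+10)/(6*x))) ≤ Real.exp (-(2*((2*y+10)/(12*x+8*y+16)))) :=
          Real.exp_le_exp.mpr h4
      _ ≤ 1 - (2*y+10)/(12*x+8*y+16) := h3
      _ = (3*(4*x+2*y+2))/(4*(3*x+2*y+4)) := by
          rw [eq_div_iff (by linarith)]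
          field_simp
          ring
  have hsplit : (9:ℝ)/16 * ((4*x+2*y+3) * (4*x+2*y+2)) / ((3*x+2*y+5) * (3*x+2*y+4))
      = ((3*(4*x+2*y+3))/(4*(3*x+2*y+5))) * ((3*(4*x+2*y+2))/(4*(3*x+2*y+4))) := by
    field_simp
    ring
  rw [hsplit]
  have hsum : (-((4*y+21)/(6*x))) = (-((2*y+11)/(6*x))) + (-((2*y+10)/(6*x))) := by
    field_simp
    ring
  rw [hsum, Real.exp_add]
  exact mul_le_mul f1 f2 (Real.exp_pos _).le (by positivity)

/-- Lower bound: `W n q ≥ W n 0 · exp(−(q+3)²/n)`. -/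
lemma Wfun_ge (n : ℕ) (hn : 1 ≤ n) (q : ℕ) :
    Wfun n 0 * Real.exp (-(((q:ℝ)+3)^2/(n:ℝ))) ≤ Wfun n q := by
  have hx : (1:ℝ) ≤ (n:ℝ) := by exact_mod_cast hn
  have hnp : (0:ℝ) < (n:ℝ) := by linarith
  induction q with
  | zero =>
    have h1 : Real.exp (-((((0:ℕ):ℝ)+3)^2/(n:ℝ))) ≤ 1 := by
      rw [← Real.exp_zero]
      apply Real.exp_le_exp.mpr
      rw [neg_le, neg_zero]
      positivity
    calc Wfun n 0 * Real.exp (-((((0:ℕ):ℝ)+3)^2/(n:ℝ))) ≤ Wfun n 0 * 1 :=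
        mul_le_mul_of_nonneg_left h1 (Wfun_pos n 0).le
      _ = Wfun n 0 := mul_one _
  | succ q ih =>
    rw [Wfun_succ]
    have hq : (0:ℝ) ≤ (q:ℝ) := Nat.cast_nonneg q
    have hc : ((q+1:ℕ):ℝ) = (q:ℝ)+1 := by push_cast; ring
    have harg : -((((q+1:ℕ):ℝ)+3)^2/(n:ℝ)) ≤
        (-(((q:ℝ)+3)^2/(n:ℝ))) + (-((4*(q:ℝ)+21)/(6*(n:ℝ)))) := by
      rw [hc, ← sub_nonneg]
      have key : (-(((q:ℝ)+3)^2/(n:ℝ)) + -((4*(q:ℝ)+21)/(6*(n:ℝ)))) -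
          (-(((((q:ℝ)+1))+3)^2/(n:ℝ))) = (8*(q:ℝ)+21)/(6*(n:ℝ)) := by
        field_simp
        ring
      rw [key]
      positivity
    calc Wfun n 0 * Real.exp (-((((q+1:ℕ):ℝ)+3)^2/(n:ℝ)))
        ≤ Wfun n 0 * Real.exp ((-(((q:ℝ)+3)^2/(n:ℝ))) + (-((4*(q:ℝ)+21)/(6*(n:ℝ))))) :=
          mul_le_mul_of_nonneg_left (Real.exp_le_exp.mpr harg) (Wfun_pos n 0).le
      _ = (Wfun n 0 * Real.exp (-(((q:ℝ)+3)^2/(n:ℝ)))) *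
            Real.exp (-((4*(q:ℝ)+21)/(6*(n:ℝ)))) := by
          rw [Real.exp_add]; ring
      _ ≤ Wfun n q * Real.exp (-((4*(q:ℝ)+21)/(6*(n:ℝ)))) :=
          mul_le_mul_of_nonneg_right ih (Real.exp_pos _).le
      _ ≤ Wfun n q * ((9:ℝ)/16 * (((4*n+2*q+3) * (4*n+2*q+2) : ℕ) : ℝ) /
            (((3*n+2*q+5) * (3*n+2*q+4) : ℕ) : ℝ)) :=
          mul_le_mul_of_nonneg_left (W_ratio_ge n q hn) (Wfun_pos n q).le

/-- `(n^(-5/2))² = 1/n⁵`. -/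
lemma rpow_sq (n : ℕ) (hn : 1 ≤ n) :
    ((n:ℝ) ^ (-(5/2) : ℝ))^2 = 1/((n:ℝ))^5 := by
  have hnp : (0:ℝ) < (n:ℝ) := by exact_mod_cast hn
  rw [← Real.rpow_natCast ((n:ℝ) ^ (-(5/2) : ℝ)) 2, ← Real.rpow_mul hnp.le]
  norm_num

lemma G_le (n : ℕ) (hn : 1 ≤ n) : Gfun n ≤ (1/6:ℝ) * (n:ℝ) ^ (-(5/2) : ℝ) := by
  have hnp : (0:ℝ) < (n:ℝ) := by exact_mod_cast hn
  have ht : (0:ℝ) < (n:ℝ) ^ (-(5/2) : ℝ) := Real.rpow_pos_of_pos hnp _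
  have h1 : (Gfun n)^2 * ((n:ℝ))^5 ≤ (1/6:ℝ)^2 := by
    refine le_trans ?_ (G_upper n)
    have : ((n:ℝ))^5 ≤ ((n:ℝ)+1)^5 := by
      apply pow_le_pow_left₀ hnp.le
      linarith
    exact mul_le_mul_of_nonneg_left this (sq_nonneg _)
  have h2 : (Gfun n)^2 ≤ ((1/6:ℝ) * (n:ℝ) ^ (-(5/2) : ℝ))^2 := by
    rw [mul_pow, rpow_sq n hn]
    rw [← le_div_iff₀ (by positivity)] at h1
    calc (Gfun n)^2 ≤ (1/6:ℝ)^2 / ((n:ℝ))^5 := h1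
      _ = (1/6:ℝ)^2 * (1/((n:ℝ))^5) := by ring
  calc Gfun n = Real.sqrt ((Gfun n)^2) := (Real.sqrt_sq (Gfun_pos n).le).symm
    _ ≤ Real.sqrt (((1/6:ℝ) * (n:ℝ) ^ (-(5/2) : ℝ))^2) := Real.sqrt_le_sqrt h2
    _ = (1/6:ℝ) * (n:ℝ) ^ (-(5/2) : ℝ) := Real.sqrt_sq (by positivity)

lemma G_ge (n : ℕ) (hn : 1 ≤ n) : (9/512:ℝ) * (n:ℝ) ^ (-(5/2) : ℝ) ≤ Gfun n := by
  have hnp : (0:ℝ) < (n:ℝ) := by exact_mod_cast hn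
  have ht : (0:ℝ) < (n:ℝ) ^ (-(5/2) : ℝ) := Real.rpow_pos_of_pos hnp _
  have h1 := G_lower n hn
  have h2 : ((9/512:ℝ) * (n:ℝ) ^ (-(5/2) : ℝ))^2 ≤ (Gfun n)^2 := by
    rw [mul_pow, rpow_sq n hn]
    rw [← div_le_iff₀ (by positivity)] at h1
    calc (9/512:ℝ)^2 * (1/((n:ℝ))^5) = (9/512:ℝ)^2/((n:ℝ))^5 := by ring
      _ ≤ (Gfun n)^2 := h1
  calc (9/512:ℝ) * (n:ℝ) ^ (-(5/2) : ℝ)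
      = Real.sqrt (((9/512:ℝ) * (n:ℝ) ^ (-(5/2) : ℝ))^2) :=
        (Real.sqrt_sq (by positivity)).symm
    _ ≤ Real.sqrt ((Gfun n)^2) := Real.sqrt_le_sqrt h2
    _ = Gfun n := Real.sqrt_sq (Gfun_pos n).le

/-- Uniform upper bound `#𝕋_{n,p} ≤ c C(p) n^{-5/2} (256/27)^n` for all `n ≥ 1`, `p ≥ 3`,
and a matching lower bound, uniform over `n ≥ 1` and `3 ≤ p ≤ α√n`, for each `α > 0`. -/
theorem Tnp_uniform_bounds :
    (∃ c > (0:ℝ), ∀ n : ℕ, 1 ≤ n → ∀ p : ℕ, 3 ≤ p →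
      Tnp n p ≤ c * Cp p * (n:ℝ) ^ (-(5/2) : ℝ) * (256/27)^n) ∧
    (∀ α > (0:ℝ), ∃ c > (0:ℝ), ∀ n : ℕ, 1 ≤ n → ∀ p : ℕ, 3 ≤ p → (p:ℝ) ≤ α * Real.sqrt n →
      c * Cp p * (n:ℝ) ^ (-(5/2) : ℝ) * (256/27)^n ≤ Tnp n p) := by
  have hsqrt : (0:ℝ) < Real.sqrt (6*Real.pi) := by
    apply Real.sqrt_pos.mpr
    positivity
  constructor
  · -- Upper bound
    refine ⟨(9/16) * Real.sqrt (6*Real.pi), by positivity, ?_⟩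
    intro n hn p hp
    obtain ⟨q, rfl⟩ : ∃ q, p = q + 3 := ⟨p - 3, by omega⟩
    rw [Tnp_eq_W]
    have hnp : (0:ℝ) < (n:ℝ) := by exact_mod_cast hn
    have ht : (0:ℝ) < (n:ℝ) ^ (-(5/2) : ℝ) := Real.rpow_pos_of_pos hnp _
    have key : Wfun n q ≤ (9/16:ℝ) * ((1/6) * (n:ℝ) ^ (-(5/2) : ℝ)) * (256/27)^n := by
      calc Wfun n q ≤ Wfun n 0 := Wfun_le_zero n q
        _ = (9/16 : ℝ) * Gfun n * (256/27)^n := Wfun_zero n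
        _ ≤ (9/16:ℝ) * ((1/6) * (n:ℝ) ^ (-(5/2) : ℝ)) * (256/27)^n := by
            have := G_le n hn
            have h27 : (0:ℝ) ≤ (256/27:ℝ)^n := by positivity
            apply mul_le_mul_of_nonneg_right _ h27
            apply mul_le_mul_of_nonneg_left this (by norm_num)
    calc 6 * Real.sqrt (6*Real.pi) * Cp (q+3) * Wfun n q
        ≤ 6 * Real.sqrt (6*Real.pi) * Cp (q+3) *
            ((9/16:ℝ) * ((1/6) * (n:ℝ) ^ (-(5/2) : ℝ)) * (256/27)^n) := by
          exact mul_le_mul_of_nonneg_left key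
            (mul_nonneg (by positivity) (Cp_pos q).le)
      _ = (9/16) * Real.sqrt (6*Real.pi) * Cp (q+3) * (n:ℝ) ^ (-(5/2) : ℝ) * (256/27)^n := by
          ring
  · -- Lower bound
    intro α hα
    refine ⟨6 * (9/16) * (9/512) * Real.exp (-(α^2)) * Real.sqrt (6*Real.pi),
      by positivity, ?_⟩
    intro n hn p hp hpa
    obtain ⟨q, rfl⟩ : ∃ q, p = q + 3 := ⟨p - 3, by omega⟩
    rw [Tnp_eq_W]
    have hnp : (0:ℝ) < (n:ℝ) := by exact_mod_cast hn
    have ht : (0:ℝ) < (n:ℝ) ^ (-(5/2) : ℝ) := Real.rpow_pos_of_pos hnp _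
    have hexp : Real.exp (-(α^2)) ≤ Real.exp (-(((q:ℝ)+3)^2/(n:ℝ))) := by
      apply Real.exp_le_exp.mpr
      rw [neg_le_neg_iff]
      rw [div_le_iff₀ hnp]
      have hp3 : ((q:ℝ)+3) = ((q+3:ℕ):ℝ) := by push_cast; ring
      have hps : ((q+3:ℕ):ℝ)^2 ≤ (α * Real.sqrt n)^2 := by
        apply pow_le_pow_left₀ (by positivity) hpa
      rw [hp3]
      calc ((q+3:ℕ):ℝ)^2 ≤ (α * Real.sqrt n)^2 := hps
        _ = α^2 * (Real.sqrt n)^2 := by ring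
        _ = α^2 * (n:ℝ) := by rw [Real.sq_sqrt hnp.le]
    have key : (9/16:ℝ) * ((9/512) * (n:ℝ) ^ (-(5/2) : ℝ)) * (256/27)^n *
        Real.exp (-(α^2)) ≤ Wfun n q := by
      calc (9/16:ℝ) * ((9/512) * (n:ℝ) ^ (-(5/2) : ℝ)) * (256/27)^n * Real.exp (-(α^2))
          ≤ (9/16:ℝ) * Gfun n * (256/27)^n * Real.exp (-(α^2)) := by
            apply mul_le_mul_of_nonneg_right _ (Real.exp_pos _).le
            have h27 : (0:ℝ) ≤ (256/27:ℝ)^n := by positivity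
            apply mul_le_mul_of_nonneg_right _ h27
            apply mul_le_mul_of_nonneg_left (G_ge n hn) (by norm_num)
        _ = Wfun n 0 * Real.exp (-(α^2)) := by rw [Wfun_zero]
        _ ≤ Wfun n 0 * Real.exp (-(((q:ℝ)+3)^2/(n:ℝ))) :=
            mul_le_mul_of_nonneg_left hexp (Wfun_pos n 0).le
        _ ≤ Wfun n q := Wfun_ge n hn q
    calc 6 * (9/16) * (9/512) * Real.exp (-(α^2)) * Real.sqrt (6*Real.pi) * Cp (q+3) *
          (n:ℝ) ^ (-(5/2) : ℝ) * (256/27)^n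
        = 6 * Real.sqrt (6*Real.pi) * Cp (q+3) *
            ((9/16:ℝ) * ((9/512) * (n:ℝ) ^ (-(5/2) : ℝ)) * (256/27)^n *
              Real.exp (-(α^2))) := by ring
      _ ≤ 6 * Real.sqrt (6*Real.pi) * Cp (q+3) * Wfun n q := by
          exact mul_le_mul_of_nonneg_left key
            (mul_nonneg (by positivity) (Cp_pos q).le)
end

section
/- The function f(x) = (1 + x/4)^{4+x} / (1 + x/3)^{3+x} satisfies f(x) ≤ 1 for all x ≥ 0. -/
open Real

private lemma g_deriv (x : ℝ) (hx : 0 < x) :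
    HasDerivAt (fun x : ℝ => (3 + x) * Real.log (1 + x/3) - (4 + x) * Real.log (1 + x/4))
      (Real.log (1 + x/3) - Real.log (1 + x/4)) x := by
  have h3 : (1 : ℝ) + x/3 ≠ 0 := by positivity
  have h4 : (1 : ℝ) + x/4 ≠ 0 := by positivity
  have d3 : HasDerivAt (fun x : ℝ => 1 + x/3) (1/3) x := by
    simpa using ((hasDerivAt_id x).div_const 3).const_add 1
  have d4 : HasDerivAt (fun x : ℝ => 1 + x/4) (1/4) x := by
    simpa using ((hasDerivAt_id x).div_const 4).const_add 1
  have l3 : HasDerivAt (fun x : ℝ => Real.log (1 + x/3)) ((1/3)/(1 + x/3)) x := d3.log h3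
  have l4 : HasDerivAt (fun x : ℝ => Real.log (1 + x/4)) ((1/4)/(1 + x/4)) x := d4.log h4
  have a3 : HasDerivAt (fun x : ℝ => 3 + x) 1 x := by simpa using (hasDerivAt_id x).const_add 3
  have a4 : HasDerivAt (fun x : ℝ => 4 + x) 1 x := by simpa using (hasDerivAt_id x).const_add 4
  have p3 := a3.mul l3
  have p4 := a4.mul l4
  have e3 : (3 + x) * ((1/3)/(1 + x/3)) = 1 := by
    field_simp
  have e4 : (4 + x) * ((1/4)/(1 + x/4)) = 1 := by
    field_simp
  have := p3.sub p4
  refine this.congr_deriv ?_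
  rw [e3, e4]
  ring

private lemma key (x : ℝ) (hx : 0 ≤ x) :
    (4 + x) * Real.log (1 + x/4) ≤ (3 + x) * Real.log (1 + x/3) := by
  set g : ℝ → ℝ := fun x => (3 + x) * Real.log (1 + x/3) - (4 + x) * Real.log (1 + x/4) with hg
  have hmono : MonotoneOn g (Set.Ici (0:ℝ)) := by
    apply monotoneOn_of_deriv_nonneg (convex_Ici 0)
    · have c3 : ContinuousOn (fun y : ℝ => Real.log (1 + y/3)) (Set.Ici 0) :=
        ContinuousOn.log (by fun_prop) (fun y hy => by
          have : (0:ℝ) ≤ y := hy; positivity)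
      have c4 : ContinuousOn (fun y : ℝ => Real.log (1 + y/4)) (Set.Ici 0) :=
        ContinuousOn.log (by fun_prop) (fun y hy => by
          have : (0:ℝ) ≤ y := hy; positivity)
      exact (((continuous_const.add continuous_id).continuousOn.mul c3).sub
        ((continuous_const.add continuous_id).continuousOn.mul c4))
    · intro y hy
      rw [interior_Ici] at hy
      exact ((g_deriv y hy).differentiableAt).differentiableWithinAt
    · intro y hy
      rw [interior_Ici] at hy
      rw [(g_deriv y hy).deriv]
      have hy' : (0:ℝ) < y := hy
      have : Real.log (1 + y/4) ≤ Real.log (1 + y/3) := by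
        apply Real.log_le_log (by positivity)
        linarith
      linarith
  have h0 : g 0 ≤ g x := by
    apply hmono (by simp) (by simpa using hx) hx
  have : g 0 = 0 := by simp [hg]
  rw [this] at h0
  simp only [hg] at h0
  linarith

/-- The function `f(x) = (1 + x/4)^{4+x} / (1 + x/3)^{3+x}` satisfies `f(x) ≤ 1` for `x ≥ 0`. -/
theorem f_le_one (x : ℝ) (hx : 0 ≤ x) :
    (1 + x/4) ^ (4 + x) / (1 + x/3) ^ (3 + x) ≤ 1 := by
  have h4 : (0:ℝ) < 1 + x/4 := by positivity
  have h3 : (0:ℝ) < 1 + x/3 := by positivity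
  rw [div_le_one (by positivity)]
  rw [Real.rpow_def_of_pos h4, Real.rpow_def_of_pos h3]
  apply Real.exp_le_exp.2
  have := key x hx
  nlinarith [this]
end
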